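/- arXiv:2108.06727 — 2 statements merged into one kernel-verified Lean document; each statement's English description precedes it below -/
import Mathlib

section
/- Let M be a model of T⁰_ceq (i.e., a structure with unary predicates P, Q partitioning the universe, a binary relation E that is an equivalence relation on Q, and a binary function F : Q × P → Q such that F(a,c) is E-equivalent to a and F(a,c) = F(b,c) whenever a E b). If A is a finite subset of M with n elements, then the closure of A under the function F has at most n + n² elements. -/
/-- In a model of T⁰_ceq, the closure of a finite set `A` with `n`
elements under the (partial) function `F` has at most `n + n²` elements. -/
theorem stmt0 {M : Type*} (P Q : Set M) (E : M → M → Prop) (F : M → M → M)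
    (hPQ : P ∪ Q = Set.univ) (hdisj : Disjoint P Q)
    (hrefl : ∀ a ∈ Q, E a a) (hsymm : ∀ a b, E a b → E b a)
    (htrans : ∀ a b c, E a b → E b c → E a c)
    (hEQ : ∀ a b, E a b → a ∈ Q ∧ b ∈ Q)
    (hFQ : ∀ a ∈ Q, ∀ c ∈ P, F a c ∈ Q)
    (hFα : ∀ a ∈ Q, ∀ c ∈ P, E (F a c) a)
    (hFβ : ∀ a b, E a b → ∀ c ∈ P, F a c = F b c)
    (A : Set M) (n : ℕ) (hA : A.Finite) (hn : A.ncard = n) :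
    (⋂₀ {B : Set M | A ⊆ B ∧ ∀ a ∈ B, ∀ c ∈ B, a ∈ Q → c ∈ P → F a c ∈ B}).Finite ∧
    (⋂₀ {B : Set M | A ⊆ B ∧ ∀ a ∈ B, ∀ c ∈ B, a ∈ Q → c ∈ P → F a c ∈ B}).ncard
      ≤ n + n ^ 2 := by
  set B : Set M := A ∪ Set.image2 F (A ∩ Q) (A ∩ P) with hB
  have hBfin : B.Finite := hA.union ((hA.inter_of_left Q).image2 F (hA.inter_of_left P))
  have hBmem : B ∈ {B : Set M | A ⊆ B ∧ ∀ a ∈ B, ∀ c ∈ B, a ∈ Q → c ∈ P → F a c ∈ B} := by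
    constructor
    · exact Set.subset_union_left
    · rintro a ha c hc haQ hcP
      -- c must be in A, since elements of the image are in Q
      have hcA : c ∈ A := by
        rcases hc with hc | hc
        · exact hc
        · exfalso
          obtain ⟨x, hx, y, hy, rfl⟩ := hc
          exact hdisj.le_bot ⟨hcP, hFQ x hx.2 y hy.2⟩
      rcases ha with ha | ha
      · exact Or.inr ⟨a, ⟨ha, haQ⟩, c, ⟨hcA, hcP⟩, rfl⟩
      · obtain ⟨x, hx, y, hy, rfl⟩ := ha
        have hE : E (F x y) x := hFα x hx.2 y hy.2
        have : F (F x y) c = F x c := hFβ _ _ hE c hcP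
        rw [this]
        exact Or.inr ⟨x, hx, c, ⟨hcA, hcP⟩, rfl⟩
  have hsub : (⋂₀ {B : Set M | A ⊆ B ∧ ∀ a ∈ B, ∀ c ∈ B, a ∈ Q → c ∈ P → F a c ∈ B}) ⊆ B :=
    Set.sInter_subset_of_mem hBmem
  have hfin := hBfin.subset hsub
  refine ⟨hfin, ?_⟩
  have h1 : (Set.image2 F (A ∩ Q) (A ∩ P)).ncard ≤ n ^ 2 := by
    calc (Set.image2 F (A ∩ Q) (A ∩ P)).ncard
        ≤ (A ∩ Q).ncard * (A ∩ P).ncard := by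
          classical
          have hsQ := hA.inter_of_left Q
          have hsP := hA.inter_of_left P
          have heq : Set.image2 F (A ∩ Q) (A ∩ P)
              = ↑(Finset.image₂ F hsQ.toFinset hsP.toFinset) := by
            rw [Finset.coe_image₂, hsQ.coe_toFinset, hsP.coe_toFinset]
          rw [heq, Set.ncard_coe_finset, Set.ncard_eq_toFinset_card _ hsQ,
            Set.ncard_eq_toFinset_card _ hsP]
          exact Finset.card_image₂_le _ _ _
      _ ≤ n * n := Nat.mul_le_mul
          (hn ▸ Set.ncard_le_ncard Set.inter_subset_left hA)
          (hn ▸ Set.ncard_le_ncard Set.inter_subset_left hA)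
      _ = n ^ 2 := (sq n).symm
  calc (⋂₀ {B : Set M | A ⊆ B ∧ ∀ a ∈ B, ∀ c ∈ B, a ∈ Q → c ∈ P → F a c ∈ B}).ncard
      ≤ B.ncard := Set.ncard_le_ncard hsub hBfin
    _ ≤ A.ncard + (Set.image2 F (A ∩ Q) (A ∩ P)).ncard := Set.ncard_union_le _ _
    _ ≤ n + n ^ 2 := by omega
end

section
/- Let θ be a regular cardinal, λ a cardinal, and suppose M, N are models of T⁰_ceq with universe λ, f an embedding of M into N, and E* = {δ < λ : δ is a limit ordinal and both δ is closed under f and f⁻¹, and δ is closed under the functions of M and N}. If θ ∈ E* is regular, E ⊆ E* ∩ θ is a club of θ, and a ∈ Pᴹ, then the function g_{M,E,a} is pointwise ≤ g_{N,E,f(a)}, where for a model M, club E of θ, and a ∈ Pᴹ, g_{M,E,a}(α) is defined as the minimal β ∈ E with β > α such that for all β₁ ∈ Qᴹ ∩ β, if Fᴹ(β₁,a) < θ then Fᴹ(β₁,a) < β. -/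
/-- if `f` embeds the T⁰_ceq-model `M` into `N` (both with universe
the ordinal `λ`), `E*` is the club of `δ < λ` that are limit, closed under `f`
and `f⁻¹`, and closed under the functions of `M` and `N`, `θ ∈ E*` is a regular
cardinal, `C ⊆ E* ∩ θ` is a club of `θ`, and `a ∈ Pᴹ`, then pointwise
`g_{M,C,a} ≤ g_{N,C,f(a)}` (expressed via the defining least elements). -/
theorem stmt4 (θ : Cardinal) (hθ : θ.IsRegular) (lam : Ordinal)
    (PM QM : Set Ordinal) (EM : Ordinal → Ordinal → Prop) (FM : Ordinal → Ordinal → Ordinal)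
    (PN QN : Set Ordinal) (EN : Ordinal → Ordinal → Prop) (FN : Ordinal → Ordinal → Ordinal)
    -- `M` is a model of T⁰_ceq with universe `λ`
    (hPQM : PM ∪ QM = Set.Iio lam) (hdisjM : Disjoint PM QM)
    (hreflM : ∀ a ∈ QM, EM a a) (hsymmM : ∀ a b, EM a b → EM b a)
    (htransM : ∀ a b c, EM a b → EM b c → EM a c)
    (hEQM : ∀ a b, EM a b → a ∈ QM ∧ b ∈ QM)
    (hFQM : ∀ a ∈ QM, ∀ c ∈ PM, FM a c ∈ QM)
    (hFaM : ∀ a ∈ QM, ∀ c ∈ PM, EM (FM a c) a)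
    (hFbM : ∀ a b, EM a b → ∀ c ∈ PM, FM a c = FM b c)
    -- `N` is a model of T⁰_ceq with universe `λ`
    (hPQN : PN ∪ QN = Set.Iio lam) (hdisjN : Disjoint PN QN)
    (hreflN : ∀ a ∈ QN, EN a a) (hsymmN : ∀ a b, EN a b → EN b a)
    (htransN : ∀ a b c, EN a b → EN b c → EN a c)
    (hEQN : ∀ a b, EN a b → a ∈ QN ∧ b ∈ QN)
    (hFQN : ∀ a ∈ QN, ∀ c ∈ PN, FN a c ∈ QN)
    (hFaN : ∀ a ∈ QN, ∀ c ∈ PN, EN (FN a c) a)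
    (hFbN : ∀ a b, EN a b → ∀ c ∈ PN, FN a c = FN b c)
    -- `f` is an embedding of `M` into `N`
    (f : Ordinal → Ordinal)
    (hfmap : ∀ x < lam, f x < lam)
    (hfinj : ∀ x < lam, ∀ y < lam, f x = f y → x = y)
    (hfP : ∀ x < lam, (x ∈ PM ↔ f x ∈ PN)) (hfQ : ∀ x < lam, (x ∈ QM ↔ f x ∈ QN))
    (hfE : ∀ x < lam, ∀ y < lam, (EM x y ↔ EN (f x) (f y)))
    (hfF : ∀ x ∈ QM, ∀ y ∈ PM, f (FM x y) = FN (f x) (f y))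
    -- the club `E*` of `λ`
    (Estar : Set Ordinal)
    (hEstar : Estar = {δ | δ < lam ∧ Order.IsSuccLimit δ ∧
      (∀ β < δ, f β < δ) ∧ (∀ β < lam, f β < δ → β < δ) ∧
      (∀ x < δ, ∀ y < δ, x ∈ QM → y ∈ PM → FM x y < δ) ∧
      (∀ x < δ, ∀ y < δ, x ∈ QN → y ∈ PN → FN x y < δ)})
    (hθE : θ.ord ∈ Estar)
    -- `C ⊆ E* ∩ θ` is a club of `θ`
    (C : Set Ordinal) (hCE : C ⊆ Estar ∩ Set.Iio θ.ord)
    (hCclosed : ∀ α < θ.ord, α ≠ 0 → sSup (C ∩ Set.Iio α) = α → α ∈ C)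
    (hCunbdd : ∀ α < θ.ord, ∃ β ∈ C, α < β)
    (a : Ordinal) (ha : a ∈ PM) :
    ∀ α < θ.ord, ∀ b₁ b₂ : Ordinal,
      IsLeast {β | β ∈ C ∧ α < β ∧
        ∀ β₁ ∈ QM, β₁ < β → FM β₁ a < θ.ord → FM β₁ a < β} b₁ →
      IsLeast {β | β ∈ C ∧ α < β ∧
        ∀ β₁ ∈ QN, β₁ < β → FN β₁ (f a) < θ.ord → FN β₁ (f a) < β} b₂ →
      b₁ ≤ b₂ := by
  intro α hα b₁ b₂ h1 h2
  obtain ⟨⟨hb₂C, hαb₂, hb₂F⟩, -⟩ := h2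
  subst hEstar
  obtain ⟨hθlam, -, hθf, -, -, -⟩ := hθE
  obtain ⟨⟨hb₂lam, -, hb₂f, hb₂finv, -, -⟩, hb₂θ⟩ := hCE hb₂C
  apply h1.2
  refine ⟨hb₂C, hαb₂, ?_⟩
  intro β₁ hβ₁Q hβ₁b₂ hFθ
  have halam : a < lam := by
    have : a ∈ PM ∪ QM := Or.inl ha
    rw [hPQM] at this; exact this
  have hβ₁lam : β₁ < lam := by
    have : β₁ ∈ PM ∪ QM := Or.inr hβ₁Q
    rw [hPQM] at this; exact this
  have hFlam : FM β₁ a < lam := by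
    have : FM β₁ a ∈ PM ∪ QM := Or.inr (hFQM β₁ hβ₁Q a ha)
    rw [hPQM] at this; exact this
  -- f β₁ ∈ QN, f β₁ < b₂
  have hfβ₁Q : f β₁ ∈ QN := (hfQ β₁ hβ₁lam).mp hβ₁Q
  have hfβ₁b₂ : f β₁ < b₂ := hb₂f β₁ hβ₁b₂
  -- FN (f β₁) (f a) = f (FM β₁ a) < θ.ord
  have heq : f (FM β₁ a) = FN (f β₁) (f a) := hfF β₁ hβ₁Q a ha
  have hFNθ : FN (f β₁) (f a) < θ.ord := by
    rw [← heq]; exact hθf _ hFθ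
  have hFNb₂ : FN (f β₁) (f a) < b₂ := hb₂F (f β₁) hfβ₁Q hfβ₁b₂ hFNθ
  exact hb₂finv _ hFlam (heq ▸ hFNb₂)
end
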